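/- Define G_m(s) = e^s·tanh(ms) for s > 0 and F_m(z) = (z^{m+1} - z^{-m-1})/(z^m - z^{-m}). If z = e^{s+iθ} with s > 0 and θ ∈ ℝ, then |F_m(z)| > G_m(s). -/

import Mathlib

noncomputable def Fm (m : ℕ) (z : ℂ) : ℂ :=
  (z ^ (m + 1) - z ^ (-(m + 1) : ℤ)) / (z ^ m - z ^ (-(m : ℤ)))

lemma abs_sq_aux (s θ : ℝ) (n : ℕ) :
    ‖(Complex.exp (s + θ * Complex.I)) ^ n -
      (Complex.exp (s + θ * Complex.I)) ^ (-(n : ℤ))‖ ^ 2 =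
    4 * ((Real.sinh (n * s)) ^ 2 + (Real.sin (n * θ)) ^ 2) := by
  have h2 : Real.exp (n*s) * Real.exp (-(n*s)) = 1 := by
    rw [← Real.exp_add]; simp
  have h1 := Real.sin_sq_add_cos_sq (n*θ)
  rw [zpow_neg, zpow_natCast, ← Complex.exp_nat_mul, ← Complex.exp_neg, Complex.sq_norm,
    Complex.normSq_apply]
  simp only [Complex.exp_re, Complex.exp_im, Complex.sub_re, Complex.sub_im, Complex.neg_re,
    Complex.neg_im, Complex.mul_re, Complex.mul_im, Complex.add_re, Complex.add_im,
    Complex.ofReal_re, Complex.ofReal_im, Complex.I_re, Complex.I_im, Complex.natCast_re,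
    Complex.natCast_im, Real.sinh_eq, Real.cos_neg, Real.sin_neg]
  ring_nf
  linear_combination (4*Real.sin (n*θ)^2) * h2 + (Real.exp (n*s)^2 + Real.exp (-(n*s))^2 - 2*Real.exp (n*s)*Real.exp (-(n*s))) * h1

theorem Fm_lower_bound (m : ℕ) (hm : 1 ≤ m) (s θ : ℝ) (hs : 0 < s) :
    Real.exp s * Real.tanh (m * s) <
      ‖Fm m (Complex.exp (s + θ * Complex.I))‖ := by
  set z := Complex.exp (s + θ * Complex.I) with hz
  have hp := abs_sq_aux s θ (m + 1)
  have hq := abs_sq_aux s θ m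
  have e1 : (-((m + 1 : ℕ)) : ℤ) = (-(m + 1) : ℤ) := by push_cast; ring
  rw [e1] at hp
  push_cast at hp
  set p := z ^ (m + 1) - z ^ (-(m + 1) : ℤ) with hpd
  set q := z ^ m - z ^ (-(m : ℤ)) with hqd
  have hms : (0 : ℝ) < m * s := by
    have : (1 : ℝ) ≤ m := by exact_mod_cast hm
    nlinarith
  have sinh_pos : ∀ x : ℝ, 0 < x → 0 < Real.sinh x := by
    intro x hx
    rw [Real.sinh_eq]
    have := Real.exp_lt_exp.2 (show -x < x by linarith)
    linarith
  have hS : 0 < Real.sinh (m * s) := sinh_pos _ hms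
  have hC : 0 < Real.cosh (m * s) := Real.cosh_pos (m * s)
  have hCsq : Real.cosh (m * s) ^ 2 = 1 + Real.sinh (m * s) ^ 2 := Real.cosh_sq' (m * s)
  have hP : Real.exp s * Real.sinh (m * s) < Real.sinh ((m + 1) * s) := by
    have h1 : Real.sinh ((m + 1) * s)
        = Real.sinh (m * s) * Real.cosh s + Real.cosh (m * s) * Real.sinh s := by
      rw [show ((m : ℝ) + 1) * s = m * s + s by ring, Real.sinh_add]
    have h2 : Real.exp s = Real.cosh s + Real.sinh s := (Real.cosh_add_sinh s).symm
    have h3 : Real.sinh (m * s) < Real.cosh (m * s) := Real.sinh_lt_cosh (m * s)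
    have h4 : 0 < Real.sinh s := sinh_pos _ hs
    nlinarith
  have hqabs : 0 < ‖q‖ := by
    have h : 0 < ‖q‖ ^ 2 := by
      rw [hq]; positivity
    nlinarith [norm_nonneg q]
  have hpabs : (0 : ℝ) ≤ ‖p‖ := norm_nonneg p
  have hFm : Fm m z = p / q := rfl
  rw [hFm, norm_div]
  have hL : 0 ≤ Real.exp s * Real.tanh (m * s) := by
    have : 0 ≤ Real.tanh (m * s) := by
      rw [Real.tanh_eq_sinh_div_cosh]; positivity
    positivity
  refine lt_of_pow_lt_pow_left₀ 2 (by positivity) ?_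
  rw [div_pow, mul_pow, hp, hq, Real.tanh_eq_sinh_div_cosh, div_pow, ← mul_div_assoc,
    div_lt_div_iff₀ (by positivity) (by positivity)]
  have hb := Real.sin_sq_le_one (m * θ)
  have ha := sq_nonneg (Real.sin ((m + 1) * θ))
  have hES2 : (Real.exp s) ^ 2 * Real.sinh (m * s) ^ 2 < Real.sinh ((m + 1) * s) ^ 2 := by
    have h0 : 0 ≤ Real.exp s * Real.sinh (m * s) := le_of_lt (mul_pos (Real.exp_pos s) hS)
    have := mul_self_lt_mul_self h0 hP
    nlinarith
  nlinarith [mul_lt_mul_of_pos_right hES2 (by positivity : (0:ℝ) < Real.cosh (m*s) ^ 2),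
    mul_le_mul_of_nonneg_left (show Real.sinh (m*s)^2 + Real.sin (m*θ)^2 ≤ Real.cosh (m*s)^2 by nlinarith)
      (by positivity : (0:ℝ) ≤ (Real.exp s)^2 * Real.sinh (m*s)^2),
    mul_le_mul_of_nonneg_right ha (by positivity : (0:ℝ) ≤ Real.cosh (m*s)^2)]
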